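/- There exist a metric tree X, a subset A ⊆ X that spans X (but does not strictly span X), an injective metric space Y, and a 1-roughly isometric map f : A → Y that admits no 1-roughly isometric extension f̄ : X → Y. Concretely, one may take X = [0,2], A = {0} ∪ {2 − 2^{−n} : n ≥ 1}, Y the complete simplicial metric tree with one interior vertex y₁ and edges y₀y₁ of length 1/2 and y₁yₙ of length 1/2 − 2^{−n} for n = 2, 3, …, and f sending the n-th point of A to yₙ. -/

import Mathlib

open Metric Set
open scoped ENNReal

/-- `A` spans `X`: for all `x x'`, `d(x,x') = sup_{a ∈ A} (d(x,a) − d(x',a))`. -/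
def Spans {X : Type} [MetricSpace X] (A : Set X) : Prop :=
  ∀ x x' : X, IsLUB ((fun a => dist x a - dist x' a) '' A) (dist x x')

/-- `A` strictly spans `X`: for all `x x'` there is `a ∈ A` with
`d(x,x') + d(x',a) = d(x,a)`. -/
def StrictlySpans {X : Type} [MetricSpace X] (A : Set X) : Prop :=
  ∀ x x' : X, ∃ a ∈ A, dist x x' + dist x' a = dist x a

/-- A metric space `Y` is injective: for every metric space `B`, every subset `A ⊆ B`
and every 1-Lipschitz map `f : A → Y` there is a 1-Lipschitz map `g : B → Y`
extending `f`. -/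
def IsInjectiveMS (Y : Type) [MetricSpace Y] : Prop :=
  ∀ (B : Type) [MetricSpace B] (A : Set B) (f : A → Y),
    LipschitzWith 1 f → ∃ g : B → Y, LipschitzWith 1 g ∧ ∀ a : A, g a = f a

/-- `f` is `ε`-roughly isometric: `|d(f x, f x') − d(x, x')| ≤ ε` for all `x, x'`. -/
def RoughIsom {X Y : Type} [MetricSpace X] [MetricSpace Y] (ε : ℝ) (f : X → Y) : Prop :=
  ∀ x x' : X, |dist (f x) (f x') - dist x x'| ≤ ε

/-- `s` is a geodesic segment joining `x` to `x'`: the image of an isometric embedding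
of `[0, d(x,x')]` sending `0` to `x` and `d(x,x')` to `x'`. -/
def IsGeodesicSegment {X : Type} [MetricSpace X] (x x' : X) (s : Set X) : Prop :=
  ∃ γ : ℝ → X, γ 0 = x ∧ γ (dist x x') = x' ∧
    (∀ t ∈ Set.Icc (0:ℝ) (dist x x'), ∀ t' ∈ Set.Icc (0:ℝ) (dist x x'),
      dist (γ t) (γ t') = |t - t'|) ∧
    s = γ '' Set.Icc (0:ℝ) (dist x x')

/-- A metric tree: a geodesic metric space such that for any triple of points and
any geodesic segments `xy, xz, yz` joining them, `xy ⊆ xz ∪ yz`. -/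
def IsMetricTree (X : Type) [MetricSpace X] : Prop :=
  (∀ x x' : X, ∃ s, IsGeodesicSegment x x' s) ∧
  ∀ x y z : X, ∀ sxy sxz syz : Set X,
    IsGeodesicSegment x y sxy → IsGeodesicSegment x z sxz → IsGeodesicSegment y z syz →
    sxy ⊆ sxz ∪ syz

/-- The subset `A = {0} ∪ {2 − 2^{−n} : n ≥ 1}` of `X = [0,2]`. -/
def exSpanningSet : Set (Set.Icc (0:ℝ) 2) :=
  {x | (x : ℝ) = 0 ∨ ∃ n : ℕ, 1 ≤ n ∧ (x : ℝ) = 2 - (2:ℝ) ^ (-(n : ℤ))}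

/-- `Y` is an injective metric space admitting a `1`-roughly isometric map from
`exSpanningSet` with no `1`-roughly isometric extension to all of `[0,2]`. -/
def NoExtensionProp (Y : Type) [MetricSpace Y] : Prop :=
  IsInjectiveMS Y ∧
  ∃ f : exSpanningSet → Y, RoughIsom 1 f ∧
    ¬ ∃ g : Set.Icc (0:ℝ) 2 → Y, RoughIsom 1 g ∧ ∀ a : exSpanningSet, g a.1 = f a

noncomputable section
open scoped Classical

/-- Branch lengths of the tree `Y`. -/
def brLen : ℕ → ℝ := fun n => if n = 0 then 1/2 else 1/2 - (2:ℝ) ^ (-(n:ℤ))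

lemma two_zpow_neg (n : ℕ) : (2:ℝ) ^ (-(n:ℤ)) = (1/2) ^ n := by
  rw [zpow_neg, zpow_natCast, one_div, inv_pow]

lemma two_zpow_pos (n : ℕ) : 0 < (2:ℝ) ^ (-(n:ℤ)) := by positivity

lemma two_zpow_le_half {n : ℕ} (hn : 1 ≤ n) : (2:ℝ) ^ (-(n:ℤ)) ≤ 1/2 := by
  rw [two_zpow_neg]
  calc ((1:ℝ)/2) ^ n ≤ (1/2) ^ 1 := by
        apply pow_le_pow_of_le_one <;> norm_num [hn]
    _ = 1/2 := pow_one _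

lemma brLen_nonneg (n : ℕ) : 0 ≤ brLen n := by
  unfold brLen
  split
  · norm_num
  · rename_i h
    have : (2:ℝ) ^ (-(n:ℤ)) ≤ 1/2 := two_zpow_le_half (Nat.one_le_iff_ne_zero.mpr h)
    linarith

lemma brLen_le_half (n : ℕ) : brLen n ≤ 1/2 := by
  unfold brLen
  split
  · exact le_rfl
  · have := two_zpow_pos n
    linarith

/-- The tree `Y`: a hub with countably many branches; branch `0` has length `1/2`,
branch `n ≥ 2` has length `1/2 - 2^{-n}`. The hub is represented by `(0, 0)`. -/
def Ytree : Type := {p : ℕ × ℝ // 0 ≤ p.2 ∧ p.2 ≤ brLen p.1 ∧ (p.2 = 0 → p.1 = 0)}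

namespace Ytree

def d (p q : Ytree) : ℝ := if p.1.1 = q.1.1 then |p.1.2 - q.1.2| else p.1.2 + q.1.2

lemma d_self (p : Ytree) : d p p = 0 := by simp [d]

lemma d_comm (p q : Ytree) : d p q = d q p := by
  unfold d
  rcases eq_or_ne p.1.1 q.1.1 with h | h
  · simp [h, abs_sub_comm]
  · simp [h, h.symm, add_comm]

lemma d_triangle (p q r : Ytree) : d p r ≤ d p q + d q r := by
  obtain ⟨hp0, -, -⟩ := p.2
  obtain ⟨hq0, -, -⟩ := q.2
  obtain ⟨hr0, -, -⟩ := r.2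
  unfold d
  rcases eq_or_ne p.1.1 q.1.1 with h1 | h1 <;> rcases eq_or_ne q.1.1 r.1.1 with h2 | h2
  · simp only [h1, h2, if_pos rfl, h1.trans h2]
    exact abs_sub_le _ _ _
  · rw [if_neg (h1 ▸ h2), if_pos h1, if_neg h2]
    have h3 : p.1.2 ≤ |p.1.2 - q.1.2| + q.1.2 := by
      have := le_abs_self (p.1.2 - q.1.2); linarith
    linarith
  · rw [if_neg (fun h => h1 (h.trans h2.symm)), if_neg h1, if_pos h2]
    have h3 : r.1.2 ≤ |q.1.2 - r.1.2| + q.1.2 := by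
      have := neg_abs_le (q.1.2 - r.1.2); linarith
    linarith
  · rw [if_neg h1, if_neg h2]
    rcases eq_or_ne p.1.1 r.1.1 with h3 | h3
    · rw [if_pos h3]
      have h4 : |p.1.2 - r.1.2| ≤ p.1.2 + r.1.2 := by
        rw [abs_sub_le_iff]; constructor <;> linarith
      linarith
    · rw [if_neg h3]; linarith

lemma d_eq_zero {p q : Ytree} (h : d p q = 0) : p = q := by
  unfold d at h
  obtain ⟨hp0, -, hpz⟩ := p.2
  obtain ⟨hq0, -, hqz⟩ := q.2
  rcases eq_or_ne p.1.1 q.1.1 with h1 | h1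
  · rw [if_pos h1] at h
    have h2 : p.1.2 = q.1.2 := by rwa [abs_eq_zero, sub_eq_zero] at h
    exact Subtype.ext (Prod.ext h1 h2)
  · rw [if_neg h1] at h
    have hp : p.1.2 = 0 := by linarith
    have hq : q.1.2 = 0 := by linarith
    exact absurd ((hpz hp).trans (hqz hq).symm) h1

instance : MetricSpace Ytree where
  dist := d
  dist_self := d_self
  dist_comm := d_comm
  dist_triangle := d_triangle
  eq_of_dist_eq_zero := d_eq_zero

lemma dist_def (p q : Ytree) :
    dist p q = if p.1.1 = q.1.1 then |p.1.2 - q.1.2| else p.1.2 + q.1.2 := rfl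

/-- The distinguished points: `yPt 0 = y₀` is the tip of branch `0`;
`yPt 1` is the hub; `yPt n` for `n ≥ 2` is the tip of branch `n`. -/
def yPt (n : ℕ) : Ytree :=
  if h : n = 0 then ⟨(0, 1/2), by norm_num [brLen]⟩
  else ⟨(if n = 1 then 0 else n, 1/2 - (2:ℝ) ^ (-(n:ℤ))), by
    have h1 := two_zpow_le_half (Nat.one_le_iff_ne_zero.mpr h)
    have h2 := two_zpow_pos n
    refine ⟨by linarith, ?_, ?_⟩
    · rcases eq_or_ne n 1 with rfl | hn1
      · simp only [if_pos rfl, brLen, if_pos rfl]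
        norm_num
      · simp only [if_neg hn1, brLen, if_neg h, le_refl]
    · intro h0
      rcases eq_or_ne n 1 with rfl | hn1
      · simp
      · exfalso
        have hn2 : 2 ≤ n := by omega
        rw [sub_eq_zero, two_zpow_neg] at h0
        have : ((1:ℝ)/2) ^ n ≤ (1/2)^2 := by
          apply pow_le_pow_of_le_one <;> norm_num [hn2]
        rw [← h0] at this
        norm_num at this⟩


lemma t_nonneg (p : Ytree) : 0 ≤ p.1.2 := p.2.1
lemma t_le (p : Ytree) : p.1.2 ≤ brLen p.1.1 := p.2.2.1
lemma t_le_half (p : Ytree) : p.1.2 ≤ 1/2 := (t_le p).trans (brLen_le_half _)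

lemma diam_le_one (p q : Ytree) : dist p q ≤ 1 := by
  rw [dist_def]
  have := t_nonneg p; have := t_nonneg q
  have := t_le_half p; have := t_le_half q
  split
  · rw [abs_sub_le_iff]; constructor <;> linarith
  · linarith

lemma dist_nonneg' (p q : Ytree) : 0 ≤ dist p q := dist_nonneg

lemma dist_yPt_zero {n : ℕ} (hn : 1 ≤ n) :
    dist (yPt n) (yPt 0) = 1 - (2:ℝ) ^ (-(n:ℤ)) := by
  have hn0 : n ≠ 0 := by omega
  rcases eq_or_ne n 1 with rfl | hn1
  · rw [dist_def]
    have e1 : (yPt 1).1 = (0, 0) := by simp [yPt]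
    have e0 : (yPt 0).1 = (0, 1/2) := by simp [yPt]
    rw [e1, e0]
    norm_num
  · rw [dist_def]
    have : n ≠ 0 := hn0
    have e1 : (yPt n).1 = (n, 1/2 - (2:ℝ) ^ (-(n:ℤ))) := by simp [yPt, hn0, hn1]
    have e0 : (yPt 0).1 = (0, 1/2) := by simp [yPt]
    rw [e1, e0]
    rw [if_neg (by exact_mod_cast hn0)]
    have := two_zpow_le_half hn
    norm_num
    linarith

lemma dist_lt_one_yPt_zero (p : Ytree) : dist p (yPt 0) < 1 := by
  rw [dist_def]
  have h0 := t_nonneg p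
  have h2 : (yPt 0).1.2 = 1/2 := by simp [yPt]
  have h3 : (yPt 0).1.1 = 0 := by simp [yPt]
  split
  · rw [h2, abs_lt]
    have := t_le_half p
    constructor <;> linarith
  · rename_i hne
    rw [h3] at hne
    -- p is on a branch k ≠ 0, so p.1.2 ≤ brLen k = 1/2 - 2^{-k}
    have hk : p.1.1 ≠ 0 := hne
    have h4 : p.1.2 ≤ 1/2 - (2:ℝ) ^ (-(p.1.1:ℤ)) := by
      have := t_le p
      unfold brLen at this
      rwa [if_neg hk] at this
    have h5 := two_zpow_pos p.1.1
    rw [h2]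
    linarith

/-- Hyperconvexity of `Ytree`. -/
lemma hyperconvex (ι : Type) (p : ι → Ytree) (r : ι → ℝ)
    (h : ∀ i j, dist (p i) (p j) ≤ r i + r j) :
    ∃ z : Ytree, ∀ i, dist z (p i) ≤ r i := by
  have hr : ∀ i, 0 ≤ r i := by
    intro i
    have := h i i
    rw [dist_self] at this
    linarith
  by_cases hS : ∃ i, r i < (p i).1.2
  · obtain ⟨i₀, hi₀⟩ := hS
    set k := (p i₀).1.1 with hk
    -- all deep constraints lie on branch k
    have hbr : ∀ i, r i < (p i).1.2 → (p i).1.1 = k := by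
      intro i hi
      by_contra hne
      have := h i i₀
      rw [dist_def, if_neg hne] at this
      linarith
    set T : Set ℝ := {s : ℝ | ∃ i, (p i).1.1 = k ∧ s = (p i).1.2 - r i} with hT
    have hTne : ((p i₀).1.2 - r i₀) ∈ T := ⟨i₀, rfl, rfl⟩
    have hTbdd : BddAbove T := by
      refine ⟨brLen k, ?_⟩
      rintro s ⟨i, hik, rfl⟩
      have := t_le (p i)
      rw [hik] at this
      have := hr i
      linarith
    set σ := sSup T with hσ
    have hσ1 : (p i₀).1.2 - r i₀ ≤ σ := le_csSup hTbdd hTne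
    have hσpos : 0 < σ := by linarith
    have hσle : σ ≤ brLen k := csSup_le ⟨_, hTne⟩ (by
      rintro s ⟨i, hik, rfl⟩
      have := t_le (p i); rw [hik] at this
      have := hr i; linarith)
    refine ⟨⟨(k, σ), le_of_lt hσpos, hσle, fun h0 => absurd h0 (ne_of_gt hσpos)⟩, ?_⟩
    intro j
    erw [dist_def]
    dsimp only
    rcases eq_or_ne k (p j).1.1 with hj | hj
    · rw [if_pos hj]
      rw [abs_sub_le_iff]
      constructor
      · -- σ - t_j ≤ r_j
        have : σ ≤ (p j).1.2 + r j := csSup_le ⟨_, hTne⟩ (by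
          rintro s ⟨i, hik, rfl⟩
          have hij := h i j
          rw [dist_def, hik, hj, if_pos rfl] at hij
          have := le_abs_self ((p i).1.2 - (p j).1.2)
          linarith)
        linarith
      · -- t_j - σ ≤ r_j
        have : (p j).1.2 - r j ≤ σ := le_csSup hTbdd ⟨j, hj.symm, rfl⟩
        linarith
    · rw [if_neg hj]
      have : σ ≤ r j - (p j).1.2 := csSup_le ⟨_, hTne⟩ (by
        rintro s ⟨i, hik, rfl⟩
        have hij := h i j
        rw [dist_def, hik] at hij
        rw [if_neg hj] at hij
        linarith)
      linarith
  · push_neg at hS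
    refine ⟨⟨(0, 0), le_rfl, brLen_nonneg 0, fun _ => rfl⟩, ?_⟩
    intro i
    erw [dist_def]
    dsimp only
    have := hS i
    have := t_nonneg (p i)
    split
    · rw [abs_sub_le_iff]; constructor <;> linarith
    · linarith


lemma injectiveMS : IsInjectiveMS Ytree := by
  intro B _ A f hf
  classical
  set G0 : Set (B × Ytree) := Set.range (fun a : A => ((a : B), f a)) with hG0
  set S : Set (Set (B × Ytree)) :=
    {G | G0 ⊆ G ∧ ∀ x ∈ G, ∀ y ∈ G, dist x.2 y.2 ≤ dist x.1 y.1} with hS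
  have hG0S : G0 ∈ S := by
    refine ⟨Subset.rfl, ?_⟩
    rintro _ ⟨a, rfl⟩ _ ⟨a', rfl⟩
    have h1 := hf.dist_le_mul a a'
    rw [NNReal.coe_one, one_mul, Subtype.dist_eq] at h1
    exact h1
  have hchainU : ∀ c ⊆ S, IsChain (· ⊆ ·) c → c.Nonempty →
      ∃ ub ∈ S, ∀ s ∈ c, s ⊆ ub := by
    intro c hcS hchain hcne
    refine ⟨⋃₀ c, ⟨?_, ?_⟩, fun s hs => subset_sUnion_of_mem hs⟩
    · obtain ⟨t, ht⟩ := hcne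
      exact (hcS ht).1.trans (subset_sUnion_of_mem ht)
    · rintro x ⟨G1, hG1, hx⟩ y ⟨G2, hG2, hy⟩
      rcases hchain.total hG1 hG2 with hsub | hsub
      · exact (hcS hG2).2 x (hsub hx) y hy
      · exact (hcS hG1).2 x hx y (hsub hy)
  obtain ⟨M, hG0M, hMS, hMmax⟩ : ∃ M, G0 ⊆ M ∧ M ∈ S ∧ ∀ G ∈ S, M ⊆ G → G ⊆ M := by
    obtain ⟨M, h1, h2⟩ := zorn_subset_nonempty S hchainU G0 hG0S
    exact ⟨M, h1, h2.1, fun G hG hMG => h2.2 hG hMG⟩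
  have htot : ∀ b : B, ∃ y, (b, y) ∈ M := by
    intro b
    by_contra hb
    push_neg at hb
    have hpair : ∀ i j : M, dist ((i : B × Ytree).2) ((j : B × Ytree).2) ≤
        dist b (i : B × Ytree).1 + dist b (j : B × Ytree).1 := by
      intro i j
      calc dist (i : B × Ytree).2 (j : B × Ytree).2
          ≤ dist (i : B × Ytree).1 (j : B × Ytree).1 := hMS.2 _ i.2 _ j.2
        _ ≤ dist b (i : B × Ytree).1 + dist b (j : B × Ytree).1 := dist_triangle_left _ _ _
    obtain ⟨z, hz⟩ := hyperconvex M (fun m => (m : B × Ytree).2)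
        (fun m => dist b (m : B × Ytree).1) hpair
    have hins : insert (b, z) M ∈ S := by
      refine ⟨hG0M.trans (subset_insert _ _), ?_⟩
      rintro x hx y hy
      rcases mem_insert_iff.mp hx with rfl | hx <;>
        rcases mem_insert_iff.mp hy with rfl | hy
      · simp
      · exact hz ⟨y, hy⟩
      · rw [dist_comm, dist_comm x.1]
        exact hz ⟨x, hx⟩
      · exact hMS.2 x hx y hy
    exact hb z (hMmax _ hins (subset_insert _ _) (mem_insert _ _))
  refine ⟨fun b => (htot b).choose, ?_, ?_⟩
  · apply LipschitzWith.of_dist_le_mul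
    intro x y
    rw [NNReal.coe_one, one_mul]
    exact hMS.2 _ (htot x).choose_spec _ (htot y).choose_spec
  · intro a
    have h1 : ((a : B), f a) ∈ M := hG0M ⟨a, rfl⟩
    have h2 := (htot (a : B)).choose_spec
    have h3 := hMS.2 _ h2 _ h1
    rw [dist_self] at h3
    exact dist_le_zero.mp h3

end Ytree


section IccTree

lemma geod_char {x y : Set.Icc (0:ℝ) 2} (hxy : (x:ℝ) ≤ y) {s : Set (Set.Icc (0:ℝ) 2)}
    (hs : IsGeodesicSegment x y s) (w : Set.Icc (0:ℝ) 2) :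
    w ∈ s ↔ (x:ℝ) ≤ w ∧ (w:ℝ) ≤ y := by
  obtain ⟨γ, h0, hd, hiso, rfl⟩ := hs
  have hdist : dist x y = (y:ℝ) - x := by
    rw [Subtype.dist_eq, Real.dist_eq, abs_sub_comm, abs_of_nonneg (by linarith)]
  have hdnn : (0:ℝ) ≤ dist x y := dist_nonneg
  have key : ∀ t ∈ Set.Icc (0:ℝ) (dist x y), (γ t : ℝ) = x + t := by
    intro t ht
    have h1 := hiso t ht 0 ⟨le_rfl, hdnn⟩
    have h2 := hiso t ht (dist x y) ⟨hdnn, le_rfl⟩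
    rw [h0, Subtype.dist_eq, Real.dist_eq] at h1
    rw [hd, Subtype.dist_eq, Real.dist_eq] at h2
    rw [sub_zero, abs_of_nonneg ht.1] at h1
    have h2' : |(γ t : ℝ) - (y:ℝ)| = dist x y - t := by
      rw [h2, abs_sub_comm]
      exact abs_of_nonneg (by linarith [ht.2])
    have hu : (γ t : ℝ) - x ≤ t := by
      have := le_abs_self ((γ t : ℝ) - x); linarith
    have hl : (y:ℝ) - γ t ≤ dist x y - t := by
      have := neg_abs_le ((γ t : ℝ) - (y:ℝ)); linarith
    linarith
  constructor
  · rintro ⟨t, ht, rfl⟩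
    rw [key t ht]
    refine ⟨by linarith [ht.1], ?_⟩
    have := ht.2
    linarith [hdist ▸ this]
  · rintro ⟨h1, h2⟩
    refine ⟨(w:ℝ) - x, ⟨by linarith, by rw [hdist]; linarith⟩, ?_⟩
    apply Subtype.ext
    rw [key _ ⟨by linarith, by rw [hdist]; linarith⟩]
    ring

lemma geod_symm {X : Type} [MetricSpace X] {x y : X} {s : Set X}
    (h : IsGeodesicSegment x y s) : IsGeodesicSegment y x s := by
  obtain ⟨γ, h0, hd, hiso, rfl⟩ := h
  have hdnn : (0:ℝ) ≤ dist x y := dist_nonneg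
  have hcomm : dist y x = dist x y := dist_comm y x
  refine ⟨fun t => γ (dist x y - t), by simp [hd], by rw [hcomm]; simp [h0], ?_, ?_⟩
  · intro t ht t' ht'
    rw [hcomm] at ht ht'
    rw [hiso (dist x y - t) ⟨by linarith [ht.2], by linarith [ht.1]⟩
      (dist x y - t') ⟨by linarith [ht'.2], by linarith [ht'.1]⟩]
    rw [abs_sub_comm]
    ring_nf
  · rw [hcomm]
    ext w
    constructor
    · rintro ⟨t, ht, rfl⟩
      exact ⟨dist x y - t, ⟨by linarith [ht.2], by linarith [ht.1]⟩, by
        simp [sub_sub_cancel]⟩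
    · rintro ⟨t, ht, hw⟩
      exact ⟨dist x y - t, ⟨by linarith [ht.2], by linarith [ht.1]⟩, hw⟩

/-- Clamp a real number into `[0,2]`. -/
def clampI (a : ℝ) : Set.Icc (0:ℝ) 2 :=
  ⟨max 0 (min 2 a), le_max_left _ _, max_le (by norm_num) (min_le_left _ _)⟩

lemma clampI_coe {a : ℝ} (h1 : 0 ≤ a) (h2 : a ≤ 2) : (clampI a : ℝ) = a := by
  unfold clampI
  simp only
  rw [min_eq_right h2, max_eq_right h1]

lemma geod_exists {x y : Set.Icc (0:ℝ) 2} (hxy : (x:ℝ) ≤ y) :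
    IsGeodesicSegment x y (((fun t => clampI ((x:ℝ) + t))) '' Set.Icc 0 (dist x y)) := by
  have hdist : dist x y = (y:ℝ) - x := by
    rw [Subtype.dist_eq, Real.dist_eq, abs_sub_comm, abs_of_nonneg (by linarith)]
  have hx0 : (0:ℝ) ≤ x := x.2.1
  have hy2 : (y:ℝ) ≤ 2 := y.2.2
  have hmem : ∀ t ∈ Set.Icc (0:ℝ) (dist x y), 0 ≤ (x:ℝ) + t ∧ (x:ℝ) + t ≤ 2 := by
    intro t ht
    rw [hdist] at ht
    constructor <;> linarith [ht.1, ht.2]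
  refine ⟨fun t => clampI ((x:ℝ) + t), ?_, ?_, ?_, rfl⟩
  · apply Subtype.ext
    show (clampI ((x:ℝ) + 0) : ℝ) = (x:ℝ)
    rw [add_zero, clampI_coe hx0 (le_trans hxy hy2)]
  · apply Subtype.ext
    show (clampI ((x:ℝ) + dist x y) : ℝ) = (y:ℝ)
    rw [hdist, clampI_coe (by linarith) (by linarith)]
    ring
  · intro t ht t' ht'
    obtain ⟨ha1, ha2⟩ := hmem t ht
    obtain ⟨hb1, hb2⟩ := hmem t' ht'
    rw [Subtype.dist_eq, Real.dist_eq, clampI_coe ha1 ha2, clampI_coe hb1 hb2]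
    ring_nf

lemma mem_geod_iff {x y : Set.Icc (0:ℝ) 2} {s : Set (Set.Icc (0:ℝ) 2)}
    (h : IsGeodesicSegment x y s) (w : Set.Icc (0:ℝ) 2) :
    w ∈ s ↔ ((x:ℝ) ≤ w ∧ (w:ℝ) ≤ y) ∨ ((y:ℝ) ≤ w ∧ (w:ℝ) ≤ x) := by
  rcases le_total (x:ℝ) (y:ℝ) with h1 | h1
  · rw [geod_char h1 h]
    constructor
    · exact Or.inl
    · rintro (h2 | ⟨h2, h3⟩)
      · exact h2
      · constructor <;> linarith
  · rw [geod_char h1 (geod_symm h)]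
    constructor
    · exact Or.inr
    · rintro (⟨h2, h3⟩ | h2)
      · constructor <;> linarith
      · exact h2

lemma icc_isMetricTree : IsMetricTree (Set.Icc (0:ℝ) 2) := by
  constructor
  · intro x y
    rcases le_total (x:ℝ) (y:ℝ) with h | h
    · exact ⟨_, geod_exists h⟩
    · exact ⟨_, geod_symm (geod_exists h)⟩
  · intro x y z sxy sxz syz hxy hxz hyz w hw
    rw [mem_geod_iff hxy] at hw
    rcases hw with ⟨h1, h2⟩ | ⟨h1, h2⟩ <;> rcases le_total ((w:ℝ)) z with h3 | h3
    · exact Or.inl ((mem_geod_iff hxz w).mpr (Or.inl ⟨h1, h3⟩))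
    · exact Or.inr ((mem_geod_iff hyz w).mpr (Or.inr ⟨h3, h2⟩))
    · exact Or.inr ((mem_geod_iff hyz w).mpr (Or.inl ⟨h1, h3⟩))
    · exact Or.inl ((mem_geod_iff hxz w).mpr (Or.inr ⟨h3, h2⟩))

end IccTree

section Main

lemma aPt_mem (n : ℕ) (hn : 1 ≤ n) : (2 - (2:ℝ) ^ (-(n:ℤ))) ∈ Set.Icc (0:ℝ) 2 := by
  have h1 := two_zpow_pos n
  have h2 := two_zpow_le_half hn
  constructor <;> linarith

lemma zeroPt_mem : (0:ℝ) ∈ Set.Icc (0:ℝ) 2 := by norm_num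

lemma spans_ex : Spans exSpanningSet := by
  intro x x'
  constructor
  · rintro _ ⟨a, _, rfl⟩
    have := dist_triangle x x' a
    simp only
    linarith
  · intro b hb
    set u := (x:ℝ) with hu
    set v := (x':ℝ) with hv
    have hx2 := x.2
    have hx'2 := x'.2
    have hu0 : 0 ≤ u := hx2.1
    have hu2 : u ≤ 2 := hx2.2
    have hv0 : 0 ≤ v := hx'2.1
    have hv2 : v ≤ 2 := hx'2.2
    have hdist : dist x x' = |u - v| := by rw [Subtype.dist_eq, Real.dist_eq]
    have hval : ∀ a : Set.Icc (0:ℝ) 2, a ∈ exSpanningSet →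
        |u - (a:ℝ)| - |v - (a:ℝ)| ≤ b := by
      intro a ha
      have := hb ⟨a, ha, rfl⟩
      simpa [Subtype.dist_eq, Real.dist_eq] using this
    rcases le_total v u with hvu | hvu
    · have h0 : (⟨0, zeroPt_mem⟩ : Set.Icc (0:ℝ) 2) ∈ exSpanningSet := Or.inl rfl
      have := hval _ h0
      rw [hdist, abs_of_nonneg (by linarith)]
      simp only [sub_zero] at this
      rw [abs_of_nonneg (by exact hx2.1), abs_of_nonneg (by exact hx'2.1)] at this
      linarith
    · rw [hdist, abs_of_nonpos (by linarith)]
      rcases hvu.lt_or_eq with hlt | heq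
      swap
      · have h0 : (⟨0, zeroPt_mem⟩ : Set.Icc (0:ℝ) 2) ∈ exSpanningSet := Or.inl rfl
        have := hval _ h0
        simp only [sub_zero] at this
        rw [abs_of_nonneg (by exact hx2.1), abs_of_nonneg (by exact hx'2.1)] at this
        linarith
      apply le_of_forall_pos_le_add
      intro ε hε
      have h2u : 0 < 2 - u := by linarith [hx'2.2]
      obtain ⟨n₀, hn₀⟩ := exists_pow_lt_of_lt_one (lt_min h2u (half_pos hε))
        (by norm_num : (1:ℝ)/2 < 1)
      set n := max n₀ 1 with hn
      have hn1 : 1 ≤ n := le_max_right _ _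
      have hsmall : (2:ℝ) ^ (-(n:ℤ)) < min (2 - u) (ε/2) := by
        rw [two_zpow_neg]
        calc ((1:ℝ)/2) ^ n ≤ (1/2) ^ n₀ := by
              apply pow_le_pow_of_le_one (by norm_num) (by norm_num) (le_max_left _ _)
          _ < _ := hn₀
      have ha1 : (2:ℝ) ^ (-(n:ℤ)) < 2 - u := lt_of_lt_of_le hsmall (min_le_left _ _)
      have ha2 : (2:ℝ) ^ (-(n:ℤ)) < ε/2 := lt_of_lt_of_le hsmall (min_le_right _ _)
      set a : ℝ := 2 - (2:ℝ) ^ (-(n:ℤ)) with haa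
      have hmem : (⟨a, aPt_mem n hn1⟩ : Set.Icc (0:ℝ) 2) ∈ exSpanningSet :=
        Or.inr ⟨n, hn1, rfl⟩
      have hbd := hval _ hmem
      simp only at hbd
      have hau : u ≤ a := by
        have := two_zpow_pos n; simp only [haa]; linarith
      rw [abs_sub_comm u a, abs_of_nonneg (by linarith)] at hbd
      have hva : |v - a| ≤ (2 - v) + (2:ℝ) ^ (-(n:ℤ)) := by
        rw [abs_le]
        have := two_zpow_pos n
        constructor
        · simp only [haa]
          linarith [hx'2.2]
        · simp only [haa]
          linarith [hvu, hau]
      have := two_zpow_pos n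
      simp only [haa] at hbd
      linarith
    
lemma not_strictlySpans_ex : ¬ StrictlySpans exSpanningSet := by
  intro h
  obtain ⟨a, ha, heq⟩ := h ⟨0, zeroPt_mem⟩ ⟨2, by norm_num⟩
  have ha2 := a.2
  rw [Subtype.dist_eq, Subtype.dist_eq, Subtype.dist_eq] at heq
  simp only [Real.dist_eq] at heq
  have h1 : |(0:ℝ) - 2| = 2 := by norm_num
  have h2 : |(2:ℝ) - a| = 2 - a := by
    rw [abs_of_nonneg]; linarith [ha2.2]
  have h3 : |(0:ℝ) - a| = (a:ℝ) := by
    rw [abs_sub_comm, sub_zero, abs_of_nonneg ha2.1]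
  rw [h1, h2, h3] at heq
  have ha4 : (a:ℝ) = 2 := by linarith
  rcases ha with h | ⟨n, hn, h⟩
  · rw [h] at ha4; norm_num at ha4
  · rw [h] at ha4
    have := two_zpow_pos n
    linarith

/-- The map `f : A → Y`. -/
noncomputable def fmap (a : exSpanningSet) : Ytree :=
  if h : ∃ n : ℕ, 1 ≤ n ∧ ((a : Set.Icc (0:ℝ) 2) : ℝ) = 2 - (2:ℝ) ^ (-(n:ℤ)) then
    Ytree.yPt h.choose
  else Ytree.yPt 0

lemma fmap_zero (a : exSpanningSet) (ha : ((a : Set.Icc (0:ℝ) 2) : ℝ) = 0) :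
    fmap a = Ytree.yPt 0 := by
  unfold fmap
  rw [dif_neg]
  rintro ⟨n, hn, hval⟩
  rw [ha] at hval
  have h1 := two_zpow_le_half hn
  linarith

lemma roughIsom_fmap : RoughIsom 1 fmap := by
  intro a a'
  have hdist : dist a a' = |((a : Set.Icc (0:ℝ) 2) : ℝ) - ((a' : Set.Icc (0:ℝ) 2) : ℝ)| := by
    rw [Subtype.dist_eq, Subtype.dist_eq, Real.dist_eq]
  unfold fmap
  by_cases h : ∃ n : ℕ, 1 ≤ n ∧ ((a : Set.Icc (0:ℝ) 2) : ℝ) = 2 - (2:ℝ) ^ (-(n:ℤ)) <;>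
    by_cases h' : ∃ n : ℕ, 1 ≤ n ∧ ((a' : Set.Icc (0:ℝ) 2) : ℝ) = 2 - (2:ℝ) ^ (-(n:ℤ))
  · -- both branch points
    rw [dif_pos h, dif_pos h']
    obtain ⟨hn1, hval⟩ := h.choose_spec
    obtain ⟨hn1', hval'⟩ := h'.choose_spec
    have hd1 : dist (Ytree.yPt h.choose) (Ytree.yPt h'.choose) ≤ 1 := Ytree.diam_le_one _ _
    have hd0 : (0:ℝ) ≤ dist (Ytree.yPt h.choose) (Ytree.yPt h'.choose) := dist_nonneg
    have hv : |((a : Set.Icc (0:ℝ) 2) : ℝ) - ((a' : Set.Icc (0:ℝ) 2) : ℝ)| ≤ 1/2 := by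
      rw [hval, hval']
      have p1 := two_zpow_pos h.choose
      have p2 := two_zpow_pos h'.choose
      have q1 := two_zpow_le_half hn1
      have q2 := two_zpow_le_half hn1'
      rw [abs_le]
      constructor <;> linarith
    rw [hdist, abs_le]
    have := neg_abs_le (((a : Set.Icc (0:ℝ) 2) : ℝ) - ((a' : Set.Icc (0:ℝ) 2) : ℝ))
    have := le_abs_self (((a : Set.Icc (0:ℝ) 2) : ℝ) - ((a' : Set.Icc (0:ℝ) 2) : ℝ))
    constructor <;> linarith
  · -- a' = 0
    have ha' : ((a' : Set.Icc (0:ℝ) 2) : ℝ) = 0 := by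
      rcases a'.2 with h0 | h0
      · exact h0
      · exact absurd h0 h'
    rw [dif_pos h, dif_neg h']
    obtain ⟨hn1, hval⟩ := h.choose_spec
    rw [Ytree.dist_yPt_zero hn1, hdist, ha']
    have p1 := two_zpow_pos h.choose
    have p2 := two_zpow_le_half hn1
    have ha0 : (0:ℝ) ≤ ((a : Set.Icc (0:ℝ) 2) : ℝ) := by rw [hval]; linarith
    rw [sub_zero, abs_of_nonneg ha0, abs_le]
    constructor <;> [linarith [hval]; linarith [hval]]
  · -- a = 0
    have ha : ((a : Set.Icc (0:ℝ) 2) : ℝ) = 0 := by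
      rcases a.2 with h0 | h0
      · exact h0
      · exact absurd h0 h
    rw [dif_neg h, dif_pos h']
    obtain ⟨hn1, hval⟩ := h'.choose_spec
    rw [dist_comm, Ytree.dist_yPt_zero hn1, hdist, ha]
    have p1 := two_zpow_pos h'.choose
    have p2 := two_zpow_le_half hn1
    have ha0 : (0:ℝ) ≤ ((a' : Set.Icc (0:ℝ) 2) : ℝ) := by rw [hval]; linarith
    rw [zero_sub, abs_neg, abs_of_nonneg ha0, abs_le]
    constructor <;> [linarith [hval]; linarith [hval]]
  · rw [dif_neg h, dif_neg h']
    have ha : ((a : Set.Icc (0:ℝ) 2) : ℝ) = 0 := by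
      rcases a.2 with h0 | h0
      · exact h0
      · exact absurd h0 h
    have ha' : ((a' : Set.Icc (0:ℝ) 2) : ℝ) = 0 := by
      rcases a'.2 with h0 | h0
      · exact h0
      · exact absurd h0 h'
    rw [dist_self, hdist, ha, ha']
    norm_num

lemma no_extension :
    ¬ ∃ g : Set.Icc (0:ℝ) 2 → Ytree, RoughIsom 1 g ∧ ∀ a : exSpanningSet, g a.1 = fmap a := by
  rintro ⟨g, hg, hext⟩
  set a0 : exSpanningSet := ⟨⟨0, zeroPt_mem⟩, Or.inl rfl⟩ with ha0
  have h1 := hg ⟨2, by norm_num⟩ a0.1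
  have h2 : g a0.1 = Ytree.yPt 0 := by
    rw [hext a0]
    exact fmap_zero a0 rfl
  have h3 : dist (⟨2, by norm_num⟩ : Set.Icc (0:ℝ) 2) a0.1 = 2 := by
    rw [Subtype.dist_eq, Real.dist_eq]
    norm_num
  rw [h2, h3] at h1
  have h4 := Ytree.dist_lt_one_yPt_zero (g ⟨2, by norm_num⟩)
  rw [abs_le] at h1
  linarith [h1.1]

end Main

/-- Example: `X = [0,2]` is a metric tree, `A = {0} ∪ {2 − 2^{−n} : n ≥ 1}` spans `X`
but does not strictly span it, and there are an injective metric space `Y` and a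
`1`-roughly isometric map `f : A → Y` with no `1`-roughly isometric extension to `X`. -/
theorem no_rough_isometric_extension_example :
    IsMetricTree (Set.Icc (0:ℝ) 2) ∧ Spans exSpanningSet ∧ ¬ StrictlySpans exSpanningSet ∧
    ∃ (Y : Type) (mY : MetricSpace Y), @NoExtensionProp Y mY := by
  refine ⟨icc_isMetricTree, spans_ex, not_strictlySpans_ex,
    ⟨Ytree, inferInstance, Ytree.injectiveMS, fmap, roughIsom_fmap, no_extension⟩⟩
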